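/- arXiv:1710.09050 — 5 statements merged into one kernel-verified Lean document; each statement's English description precedes it below -/
import Mathlib

section
/- If 0 < ε < 1 and s₁, ..., s_d are positive real numbers with ∏ s_j = 1 and ∑ s_j ≤ d + ε, then there exists a constant C depending only on d such that |s_j − 1| ≤ C·ε^(1/2) for every 1 ≤ j ≤ d. -/
open Finset

theorem stmt1 (d : ℕ) (hd : 1 ≤ d) :
    ∃ C : ℝ, 0 < C ∧ ∀ ε : ℝ, 0 < ε → ε < 1 →
      ∀ s : Fin d → ℝ, (∀ j, 0 < s j) →
        ∏ j, s j = 1 → ∑ j, s j ≤ d + ε →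
          ∀ j, |s j - 1| ≤ C * Real.sqrt ε := by
  refine ⟨Real.sqrt (d + 1) + 1, by positivity, ?_⟩
  intro ε hε hε1 s hs hprod hsum j
  -- sum of logs is zero
  have hlog : ∑ k, Real.log (s k) = 0 := by
    rw [← Real.log_prod (fun k _ => (hs k).ne'), hprod, Real.log_one]
  -- each term s k - 1 - log (s k) is nonneg
  have hterm : ∀ k : Fin d, 0 ≤ s k - 1 - Real.log (s k) := fun k => by
    have := Real.log_le_sub_one_of_pos (hs k)
    linarith
  -- total sum of those terms ≤ ε
  have htot : ∑ k, (s k - 1 - Real.log (s k)) ≤ ε := by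
    have : ∑ k, (s k - 1 - Real.log (s k))
        = ∑ k, s k - d - ∑ k, Real.log (s k) := by
      simp [Finset.sum_sub_distrib, Finset.card_univ]
    rw [this, hlog]
    linarith
  have hj : s j - 1 - Real.log (s j) ≤ ε := by
    have := Finset.single_le_sum (f := fun k => s k - 1 - Real.log (s k))
      (fun k _ => hterm k) (Finset.mem_univ j)
    linarith
  -- key: (√x - 1)^2 ≤ x - 1 - log x
  set x := s j with hx
  have hx0 : 0 < x := hs j
  have hsq : Real.sqrt x ^ 2 = x := Real.sq_sqrt hx0.le
  have hlogle : Real.log x ≤ 2 * (Real.sqrt x - 1) := by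
    have h1 : Real.log (Real.sqrt x) ≤ Real.sqrt x - 1 :=
      Real.log_le_sub_one_of_pos (Real.sqrt_pos.mpr hx0)
    have h2 : Real.log (Real.sqrt x) = Real.log x / 2 := Real.log_sqrt hx0.le
    linarith
  have hkey : (Real.sqrt x - 1) ^ 2 ≤ ε := by
    nlinarith [hj, hlogle, hsq]
  -- x ≤ d + 1
  have hxle : x ≤ (d : ℝ) + 1 := by
    have : x ≤ ∑ k, s k := Finset.single_le_sum (fun k _ => (hs k).le) (Finset.mem_univ j)
    linarith
  have hsle : Real.sqrt x ≤ Real.sqrt (d + 1) := Real.sqrt_le_sqrt hxle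
  -- conclude
  have habs : |x - 1| = (Real.sqrt x + 1) * |Real.sqrt x - 1| := by
    rw [← abs_of_nonneg (by positivity : (0:ℝ) ≤ Real.sqrt x + 1), ← abs_mul]
    congr 1
    nlinarith [hsq]
  have habs2 : |Real.sqrt x - 1| ≤ Real.sqrt ε := by
    rw [← Real.sqrt_sq_eq_abs]
    exact Real.sqrt_le_sqrt hkey
  rw [habs]
  have h0 : 0 ≤ Real.sqrt x + 1 := by positivity
  calc (Real.sqrt x + 1) * |Real.sqrt x - 1|
      ≤ (Real.sqrt (d + 1) + 1) * Real.sqrt ε := by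
        apply mul_le_mul (by linarith) habs2 (abs_nonneg _) (by positivity)
end

section
/- Let f : [0, ∞) → [0, ∞) be nonincreasing and supported on [0, X₁], and suppose f is concave down (f'' ≤ 0) on an interval [p − δ, p + δ] ⊂ (0, X₁) with δ > 0. If s ≥ 2/δ, then ∫₀^∞ f(x/s) dx − ∑_{k=1}^∞ f(k/s) ≥ (1/2)(f(p − δ/2) − f(p + δ/2)). -/
open MeasureTheory Set

theorem stmt6 (f : ℝ → ℝ) (X₁ p δ : ℝ) (hδ : 0 < δ)
    (hcont : ContinuousOn f (Ici 0))
    (hnonneg : ∀ x, 0 ≤ x → 0 ≤ f x)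
    (hanti : AntitoneOn f (Ici 0))
    (hsupp : ∀ x, X₁ ≤ x → f x = 0)
    (hsub : Icc (p - 2 * δ) (p + 2 * δ) ⊆ Ioo 0 X₁)
    (hdiff : ∀ x ∈ Icc (p - 2 * δ) (p + 2 * δ), DifferentiableAt ℝ f x)
    (hdiff2 : ∀ x ∈ Icc (p - 2 * δ) (p + 2 * δ), DifferentiableAt ℝ (deriv f) x)
    (hconc : ∀ x ∈ Icc (p - 2 * δ) (p + 2 * δ), deriv (deriv f) x ≤ 0)
    (s : ℝ) (hs : 2 / δ ≤ s) :
    (1 / 2) * (f (p - δ / 2) - f (p + δ / 2))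
      ≤ (∫ x in Ioi (0 : ℝ), f (x / s)) - ∑' k : ℕ, f ((k + 1) / s) := by
  have hs0 : 0 < s := lt_of_lt_of_le (div_pos two_pos hδ) hs
  have hsδ : 2 ≤ s * δ := by rw [div_le_iff₀ hδ] at hs; linarith
  have h1 : 0 < p - 2 * δ := (hsub ⟨le_refl _, by linarith⟩).1
  have h2 : p + 2 * δ < X₁ := (hsub ⟨by linarith, le_refl _⟩).2
  set F : ℝ → ℝ := fun x => f (x / s) with hFdef
  have hFc : ContinuousOn F (Ici 0) := by
    apply hcont.comp (continuous_id.div_const s).continuousOn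
    intro x hx
    exact div_nonneg hx hs0.le
  have hF_anti : AntitoneOn F (Ici 0) := by
    intro x hx y hy hxy
    exact hanti (div_nonneg hx hs0.le) (div_nonneg hy hs0.le) (by gcongr)
  have hF_supp : ∀ x : ℝ, s * X₁ ≤ x → F x = 0 := by
    intro x hx
    exact hsupp _ ((le_div_iff₀ hs0).mpr (by linarith [mul_comm s X₁]))
  -- integrability on each interval
  have hInt : ∀ m : ℕ, IntervalIntegrable F volume m (m + 1) := by
    intro m
    apply ContinuousOn.intervalIntegrable
    apply hFc.mono
    rw [uIcc_of_le (by linarith [Nat.cast_nonneg (α := ℝ) m])]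
    intro x hx
    have := hx.1
    have : (0:ℝ) ≤ m := Nat.cast_nonneg m
    exact le_trans this hx.1
  -- the key indices
  set a : ℕ := ⌊s * (p - δ / 2)⌋₊ with hadef
  set b : ℕ := ⌈s * (p + δ / 2)⌉₊ with hbdef
  set N : ℕ := ⌈s * X₁⌉₊ with hNdef
  have hpd2 : 0 < p - δ / 2 := by linarith
  have ha_le : (a : ℝ) ≤ s * (p - δ / 2) := Nat.floor_le (by positivity)
  have ha_gt : s * (p - δ / 2) - 1 < (a : ℝ) := Nat.sub_one_lt_floor _
  have hb_ge : s * (p + δ / 2) ≤ (b : ℝ) := Nat.le_ceil _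
  have hb_lt : (b : ℝ) < s * (p + δ / 2) + 1 := Nat.ceil_lt_add_one (mul_pos hs0 (by linarith)).le
  have ha_lo : s * (p - 2 * δ) ≤ (a : ℝ) := by nlinarith [ha_gt, hsδ]
  have hb_hi : (b : ℝ) ≤ s * (p + 2 * δ) := by nlinarith [hb_lt, hsδ]
  have hab : a < b := by
    have hmul : s * (p - δ / 2) < s * (p + δ / 2) := by
      apply mul_lt_mul_of_pos_left (by linarith) hs0
    have : (a : ℝ) < (b : ℝ) := by linarith
    exact_mod_cast this
  have hbN : b ≤ N := Nat.ceil_le_ceil (mul_le_mul_of_nonneg_left (by linarith) hs0.le)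
  have hNge : s * X₁ ≤ (N : ℝ) := Nat.le_ceil _
  -- concavity of f on the interval
  have hconc' : ConcaveOn ℝ (Icc (p - 2 * δ) (p + 2 * δ)) f := by
    apply concaveOn_of_deriv2_nonpos (convex_Icc _ _)
    · intro x hx
      exact ((hdiff x hx).continuousAt).continuousWithinAt
    · intro x hx
      rw [interior_Icc] at hx
      exact (hdiff x (Ioo_subset_Icc_self hx)).differentiableWithinAt
    · intro x hx
      rw [interior_Icc] at hx
      exact (hdiff2 x (Ioo_subset_Icc_self hx)).differentiableWithinAt
    · intro x hx
      rw [interior_Icc] at hx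
      exact hconc x (Ioo_subset_Icc_self hx)
  -- rewrite the integral
  have hIoi : (∫ x in Ioi (0 : ℝ), F x) = ∫ x in (0:ℝ)..(N:ℝ), F x := by
    have hN0 : (0:ℝ) ≤ (N:ℝ) := Nat.cast_nonneg N
    rw [intervalIntegral.integral_of_le hN0]
    have hunion : Ioc (0:ℝ) (N:ℝ) ∪ Ioi (N:ℝ) = Ioi (0:ℝ) := Ioc_union_Ioi_eq_Ioi hN0
    have hi1 : IntegrableOn F (Ioc (0:ℝ) (N:ℝ)) := by
      apply IntegrableOn.mono_set _ Ioc_subset_Icc_self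
      exact (hFc.mono (by intro x hx; exact hx.1)).integrableOn_Icc
    have hzero : EqOn F 0 (Ioi (N:ℝ)) := by
      intro x hx
      exact hF_supp x (le_trans hNge (le_of_lt hx))
    have hi2 : IntegrableOn F (Ioi (N:ℝ)) := by
      apply (integrableOn_congr_fun hzero measurableSet_Ioi).mpr
      exact integrableOn_zero
    rw [← hunion, setIntegral_union (Ioc_disjoint_Ioi le_rfl) measurableSet_Ioi hi1 hi2]
    rw [setIntegral_congr_fun measurableSet_Ioi hzero]
    simp
  -- rewrite the sum
  have htsum : (∑' k : ℕ, f ((k + 1) / s)) = ∑ k ∈ Finset.range N, F ((k : ℝ) + 1) := by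
    apply tsum_eq_sum
    intro k hk
    have hkN : N ≤ k := Nat.le_of_not_lt (fun h => hk (Finset.mem_range.mpr h))
    have : (N : ℝ) ≤ k := Nat.cast_le.mpr hkN
    apply hsupp
    rw [le_div_iff₀ hs0]
    have := mul_comm X₁ s
    linarith
  -- split the integral as a sum
  have hsplit : (∫ x in (0:ℝ)..(N:ℝ), F x)
      = ∑ k ∈ Finset.range N, ∫ x in (k:ℝ)..((k:ℝ)+1), F x := by
    have key := intervalIntegral.sum_integral_adjacent_intervals
      (a := fun k : ℕ => (k : ℝ)) (f := F) (μ := volume) (n := N)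
      (fun k _ => by simpa using hInt k)
    simp only [Nat.cast_zero, Nat.cast_add, Nat.cast_one] at key
    rw [← key]
  -- each term is ≥ its right endpoint value
  have hterm : ∀ k : ℕ, F ((k:ℝ)+1) ≤ ∫ x in (k:ℝ)..((k:ℝ)+1), F x := by
    intro k
    have hk0 : (0:ℝ) ≤ (k:ℝ) := Nat.cast_nonneg k
    have h := intervalIntegral.integral_mono_on (by linarith)
      (intervalIntegrable_const (c := F ((k:ℝ)+1))) (hInt k)
      (fun x hx => hF_anti (mem_Ici.mpr (le_trans hk0 hx.1)) (mem_Ici.mpr (by linarith)) hx.2)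
    simpa using h
  -- trapezoid bound for k ∈ [a, b)
  have htrap : ∀ k ∈ Finset.Ico a b,
      (F (k:ℝ) + F ((k:ℝ)+1)) / 2 ≤ ∫ x in (k:ℝ)..((k:ℝ)+1), F x := by
    intro k hk
    obtain ⟨hka, hkb⟩ := Finset.mem_Ico.mp hk
    have hka' : (a:ℝ) ≤ (k:ℝ) := Nat.cast_le.mpr hka
    have hkb' : (k:ℝ) + 1 ≤ (b:ℝ) := by
      have : (k+1 : ℕ) ≤ b := hkb
      exact_mod_cast this
    have hc1 : (p - 2*δ) * s = s * (p - 2*δ) := mul_comm _ _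
    have hc2 : (p + 2*δ) * s = s * (p + 2*δ) := mul_comm _ _
    have hu : (k:ℝ)/s ∈ Icc (p - 2*δ) (p + 2*δ) := by
      constructor
      · rw [le_div_iff₀ hs0]; linarith
      · rw [div_le_iff₀ hs0]; linarith
    have hv : ((k:ℝ)+1)/s ∈ Icc (p - 2*δ) (p + 2*δ) := by
      constructor
      · rw [le_div_iff₀ hs0]; linarith
      · rw [div_le_iff₀ hs0]; linarith
    have hlin : ∀ x ∈ Icc (k:ℝ) ((k:ℝ)+1),
        F (k:ℝ) + (x - k) * (F ((k:ℝ)+1) - F (k:ℝ)) ≤ F x := by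
      intro x hx
      have h01 : 0 ≤ x - (k:ℝ) := by linarith [hx.1]
      have h01' : 0 ≤ 1 - (x - (k:ℝ)) := by linarith [hx.2]
      have h := hconc'.2 hu hv h01' h01 (by ring)
      have heq : (1 - (x - (k:ℝ))) • ((k:ℝ)/s) + (x - (k:ℝ)) • (((k:ℝ)+1)/s) = x / s := by
        field_simp
        have hss : s * s⁻¹ = 1 := mul_inv_cancel₀ hs0.ne'
        simp only [smul_eq_mul, div_eq_mul_inv]
        linear_combination x * hss
      rw [heq] at h
      simp only [smul_eq_mul, hFdef] at h ⊢
      linarith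
    have hIl : IntervalIntegrable
        (fun x => F (k:ℝ) + (x - k) * (F ((k:ℝ)+1) - F (k:ℝ))) volume (k:ℝ) ((k:ℝ)+1) := by
      apply Continuous.intervalIntegrable
      fun_prop
    have h := intervalIntegral.integral_mono_on (by linarith) hIl (hInt k) hlin
    refine le_trans (le_of_eq ?_) h
    have hval : (∫ x in (k:ℝ)..((k:ℝ)+1), (F (k:ℝ) + (x - k) * (F ((k:ℝ)+1) - F (k:ℝ))))
        = F (k:ℝ) + (1/2) * (F ((k:ℝ)+1) - F (k:ℝ)) := by
      rw [intervalIntegral.integral_add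
        ((by fun_prop : Continuous fun _ : ℝ => F (k:ℝ)).intervalIntegrable _ _)
        ((by fun_prop : Continuous fun x : ℝ => (x - (k:ℝ)) * (F ((k:ℝ)+1) - F (k:ℝ))).intervalIntegrable _ _)]
      have h2' : (∫ x in (k:ℝ)..((k:ℝ)+1), (x - (k:ℝ)) * (F ((k:ℝ)+1) - F (k:ℝ)))
          = (∫ x in (k:ℝ)..((k:ℝ)+1), (x - (k:ℝ))) * (F ((k:ℝ)+1) - F (k:ℝ)) := by
        rw [← intervalIntegral.integral_mul_const]
      rw [h2']
      have h3 : (∫ x in (k:ℝ)..((k:ℝ)+1), (x - (k:ℝ))) = 1/2 := by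
        rw [intervalIntegral.integral_sub intervalIntegral.intervalIntegrable_id
          intervalIntegrable_const, integral_id, intervalIntegral.integral_const]
        simp [smul_eq_mul]
        ring
      rw [h3]
      simp [mul_comm]
    rw [hval]
    ring
  -- telescoping
  have htel : ∑ k ∈ Finset.Ico a b, (F (k:ℝ) - F ((k:ℝ)+1)) = F (a:ℝ) - F (b:ℝ) := by
    rw [Finset.sum_Ico_eq_sum_range]
    calc ∑ i ∈ Finset.range (b - a), (F ((a + i : ℕ) : ℝ) - F (((a + i : ℕ) : ℝ) + 1))
        = ∑ i ∈ Finset.range (b - a), (F ((a + i : ℕ) : ℝ) - F ((a + (i + 1) : ℕ) : ℝ)) := by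
          apply Finset.sum_congr rfl
          intro i _
          have : ((a + (i + 1) : ℕ) : ℝ) = ((a + i : ℕ) : ℝ) + 1 := by push_cast; ring
          rw [this]
      _ = F ((a + 0 : ℕ) : ℝ) - F ((a + (b - a) : ℕ) : ℝ) :=
          Finset.sum_range_sub' (fun i : ℕ => F ((a + i : ℕ) : ℝ)) (b - a)
      _ = F (a:ℝ) - F (b:ℝ) := by
          rw [Nat.add_zero, Nat.add_sub_cancel' (le_of_lt hab)]
  -- endpoint comparisons
  have hFa : f (p - δ / 2) ≤ F (a:ℝ) := by
    have hdiv : (a:ℝ)/s ≤ p - δ / 2 := by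
      rw [div_le_iff₀ hs0]
      have := mul_comm (p - δ / 2) s
      linarith
    exact hanti (mem_Ici.mpr (div_nonneg (Nat.cast_nonneg a) hs0.le)) (mem_Ici.mpr (by linarith)) hdiv
  have hFb : F (b:ℝ) ≤ f (p + δ / 2) := by
    have hdiv : p + δ / 2 ≤ (b:ℝ)/s := by
      rw [le_div_iff₀ hs0]
      have := mul_comm (p + δ / 2) s
      linarith
    exact hanti (mem_Ici.mpr (by linarith)) (mem_Ici.mpr (div_nonneg (Nat.cast_nonneg b) hs0.le)) hdiv
  -- assemble
  have hIcoRange : Finset.Ico a b ⊆ Finset.range N := by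
    intro k hk
    exact Finset.mem_range.mpr (lt_of_lt_of_le (Finset.mem_Ico.mp hk).2 hbN)
  calc (1 / 2) * (f (p - δ / 2) - f (p + δ / 2))
      ≤ (F (a:ℝ) - F (b:ℝ)) / 2 := by linarith
    _ = ∑ k ∈ Finset.Ico a b, (F (k:ℝ) - F ((k:ℝ)+1)) / 2 := by
        rw [← Finset.sum_div, htel]
    _ ≤ ∑ k ∈ Finset.Ico a b, ((∫ x in (k:ℝ)..((k:ℝ)+1), F x) - F ((k:ℝ)+1)) := by
        apply Finset.sum_le_sum
        intro k hk
        have := htrap k hk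
        linarith
    _ ≤ ∑ k ∈ Finset.range N, ((∫ x in (k:ℝ)..((k:ℝ)+1), F x) - F ((k:ℝ)+1)) := by
        apply Finset.sum_le_sum_of_subset_of_nonneg hIcoRange
        intro k _ _
        have := hterm k
        linarith
    _ = (∫ x in Ioi (0 : ℝ), F x) - ∑' k : ℕ, f ((k + 1) / s) := by
        rw [hIoi, hsplit, htsum, Finset.sum_sub_distrib]
end

section
/- Let Ω ⊂ ℝ^d be a compact convex body symmetric with respect to each coordinate hyperplane. Then the number of positive lattice points satisfies #(ℕ^d ∩ tAΩ) ≤ (t^{d−1}/a₁) · ∑_{k₁ ∈ ℕ} f(k₁/(a₁ t)), where A = diag(a₁, ..., a_d) with det A = 1 and f(x₁) = ∫_{ℝ₊^{d−1}} χ_Ω(x₁, x') dx' is the (restricted) parallel section function of Ω in the x₁-direction. -/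
open MeasureTheory Set Finset

lemma shrink_one {m : ℕ} {Ω : Set (ℝ × (Fin m → ℝ))} (hconv : Convex ℝ Ω)
    (hsym : ∀ x ∈ Ω, ∀ j, (x.1, Function.update x.2 j (-(x.2 j))) ∈ Ω)
    {x₁ : ℝ} {v : Fin m → ℝ} (hv : (x₁, v) ∈ Ω) (j : Fin m) {c : ℝ}
    (hc : |c| ≤ v j) : (x₁, Function.update v j c) ∈ Ω := by
  rcases eq_or_lt_of_le ((abs_nonneg c).trans hc) with h0 | h0
  · have hc0 : c = 0 := abs_eq_zero.mp (le_antisymm (hc.trans h0.symm.le) (abs_nonneg c))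
    rw [hc0, h0, Function.update_eq_self]
    exact hv
  · have hu := hsym _ hv j
    set θ : ℝ := (c + v j) / (2 * v j) with hθdef
    have hvj : v j ≠ 0 := ne_of_gt h0
    have hθ0 : 0 ≤ θ := by
      apply div_nonneg
      · linarith [neg_abs_le c, abs_le.mp (le_refl |c|), (neg_abs_le c).trans (le_abs_self c)]
      · linarith
    have hθ1 : θ ≤ 1 := by
      rw [div_le_one (by linarith)]
      have := le_abs_self c
      linarith [hc]
    have hmem := hconv hv hu hθ0 (by linarith : (0:ℝ) ≤ 1 - θ) (by ring)
    convert hmem using 1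
    simp only [Prod.smul_mk, Prod.mk_add_mk, smul_eq_mul]
    refine Prod.ext (by simp; ring) ?_
    simp only
    funext i
    simp only [Pi.add_apply, Pi.smul_apply, smul_eq_mul]
    by_cases hij : i = j
    · subst hij
      rw [Function.update_self, Function.update_self]
      have key : θ * v i + (1 - θ) * (-(v i)) = c := by
        rw [hθdef]; field_simp; ring
      linarith [key]
    · rw [Function.update_of_ne hij, Function.update_of_ne hij]
      ring

lemma shrink {m : ℕ} {Ω : Set (ℝ × (Fin m → ℝ))} (hconv : Convex ℝ Ω)
    (hsym : ∀ x ∈ Ω, ∀ j, (x.1, Function.update x.2 j (-(x.2 j))) ∈ Ω)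
    {x₁ : ℝ} {z w : Fin m → ℝ} (hz : (x₁, z) ∈ Ω) (hw : ∀ j, |w j| ≤ z j) :
    (x₁, w) ∈ Ω := by
  classical
  have main : ∀ s : Finset (Fin m), (x₁, fun i => if i ∈ s then w i else z i) ∈ Ω := by
    intro s
    induction s using Finset.induction with
    | empty => simpa using hz
    | @insert j s hj ih =>
      have hstep := shrink_one hconv hsym ih j (c := w j) (by simp [hj]; exact hw j)
      convert hstep using 2
      funext i
      by_cases hij : i = j
      · subst hij; simp [Function.update_self]
      · simp [Function.update_of_ne hij, hij]
  have := main Finset.univ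
  simpa using this

lemma slice_count {m : ℕ} {Ω : Set (ℝ × (Fin m → ℝ))} (hconv : Convex ℝ Ω)
    (hsym : ∀ x ∈ Ω, ∀ j, (x.1, Function.update x.2 j (-(x.2 j))) ∈ Ω)
    {a : Fin m → ℝ} (ha : ∀ j, 0 < a j) {t : ℝ} (ht : 0 < t) (x₁ : ℝ)
    (G : Finset (Fin m → ℕ))
    (hG : ∀ k' ∈ G, (∀ j, 1 ≤ k' j) ∧ ((x₁, fun j => (k' j : ℝ) / (a j * t)) ∈ Ω))
    (hfin : volume {x' : Fin m → ℝ | (∀ j, 0 ≤ x' j) ∧ (x₁, x') ∈ Ω} ≠ ⊤) :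
    (G.card : ℝ) * ∏ j, (1 / (a j * t)) ≤
      (volume {x' : Fin m → ℝ | (∀ j, 0 ≤ x' j) ∧ (x₁, x') ∈ Ω}).toReal := by
  classical
  set c : Fin m → ℝ := fun j => a j * t with hcdef
  have hc : ∀ j, 0 < c j := fun j => mul_pos (ha j) ht
  set B : (Fin m → ℕ) → Set (Fin m → ℝ) :=
    fun k' => Set.pi Set.univ fun j => Ioc (((k' j : ℝ) - 1) / c j) ((k' j : ℝ) / c j) with hBdef
  have hvol : ∀ k' : Fin m → ℕ, volume (B k') = ENNReal.ofReal (∏ j, 1 / c j) := by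
    intro k'
    rw [hBdef]
    rw [volume_pi_pi]
    calc ∏ i, volume (Set.Ioc (((k' i : ℝ) - 1) / c i) ((k' i : ℝ) / c i))
        = ∏ i, ENNReal.ofReal (1 / c i) := by
          refine Finset.prod_congr rfl fun j _ => ?_
          rw [Real.volume_Ioc, ← sub_div]
          norm_num
      _ = ENNReal.ofReal (∏ j, 1 / c j) :=
          (ENNReal.ofReal_prod_of_nonneg fun j _ =>
            div_nonneg zero_le_one (hc j).le).symm
  have hmeas : ∀ k' : Fin m → ℕ, MeasurableSet (B k') := fun k' =>
    MeasurableSet.univ_pi fun j => measurableSet_Ioc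
  have hdisj : Set.PairwiseDisjoint (↑G : Set (Fin m → ℕ)) B := by
    intro p hp q hq hpq
    obtain ⟨j, hj⟩ := Function.ne_iff.mp hpq
    have key : ∀ p q : Fin m → ℕ, p j < q j → Disjoint (B p) (B q) := by
      intro p q hlt
      rw [Set.disjoint_left]
      intro x hxp hxq
      have h1 := (Set.mem_univ_pi.mp hxp) j
      have h2 := (Set.mem_univ_pi.mp hxq) j
      have hle : (p j : ℝ) ≤ (q j : ℝ) - 1 := by
        have : (p j : ℝ) + 1 ≤ (q j : ℝ) := by exact_mod_cast hlt
        linarith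
      have : x j ≤ (p j : ℝ) / c j := h1.2
      have h3 : ((q j : ℝ) - 1) / c j < x j := h2.1
      have h4 : (p j : ℝ) / c j ≤ ((q j : ℝ) - 1) / c j :=
        (div_le_div_iff_of_pos_right (hc j)).mpr hle
      linarith
    rcases lt_or_gt_of_ne hj with h | h
    · exact key p q h
    · exact (key q p h).symm
  have hsub : ∀ k' ∈ G, B k' ⊆ {x' : Fin m → ℝ | (∀ j, 0 ≤ x' j) ∧ (x₁, x') ∈ Ω} := by
    intro k' hk' x' hx'
    obtain ⟨hk1, hkΩ⟩ := hG k' hk'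
    have hx := Set.mem_univ_pi.mp hx'
    have hpos : ∀ j, 0 ≤ x' j := by
      intro j
      have h1 : (0:ℝ) ≤ ((k' j : ℝ) - 1) / c j := by
        apply div_nonneg _ (hc j).le
        have : (1:ℝ) ≤ (k' j : ℝ) := by exact_mod_cast hk1 j
        linarith
      exact le_of_lt (lt_of_le_of_lt h1 (hx j).1)
    refine ⟨hpos, ?_⟩
    exact shrink hconv hsym hkΩ fun j => by
      rw [abs_of_nonneg (hpos j)]; exact (hx j).2
  have hunion : volume (⋃ k' ∈ G, B k') = (G.card : ENNReal) * ENNReal.ofReal (∏ j, 1 / c j) := by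
    rw [measure_biUnion_finset hdisj fun k' _ => hmeas k']
    simp [hvol, Finset.sum_const, nsmul_eq_mul]
  have hle : (G.card : ENNReal) * ENNReal.ofReal (∏ j, 1 / c j) ≤
      volume {x' : Fin m → ℝ | (∀ j, 0 ≤ x' j) ∧ (x₁, x') ∈ Ω} := by
    rw [← hunion]
    exact measure_mono (Set.iUnion₂_subset hsub)
  have := ENNReal.toReal_mono hfin hle
  rwa [ENNReal.toReal_mul, ENNReal.toReal_natCast,
    ENNReal.toReal_ofReal (Finset.prod_nonneg fun j _ =>
      div_nonneg zero_le_one (hc j).le)] at this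
theorem stmt7 (m : ℕ) (Ω : Set (ℝ × (Fin m → ℝ)))
    (hcomp : IsCompact Ω) (hconv : Convex ℝ Ω)
    (hsym1 : ∀ x ∈ Ω, (-x.1, x.2) ∈ Ω)
    (hsym : ∀ x ∈ Ω, ∀ j, (x.1, Function.update x.2 j (-(x.2 j))) ∈ Ω)
    (a₁ : ℝ) (a : Fin m → ℝ) (ha₁ : 0 < a₁) (ha : ∀ j, 0 < a j)
    (hdet : a₁ * ∏ j, a j = 1) (t : ℝ) (ht : 0 < t)
    (f : ℝ → ℝ)
    (hf : ∀ x₁ : ℝ, f x₁ =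
      (volume {x' : Fin m → ℝ | (∀ j, 0 ≤ x' j) ∧ (x₁, x') ∈ Ω}).toReal) :
    ((Set.ncard {k : ℕ × (Fin m → ℕ) | 1 ≤ k.1 ∧ (∀ j, 1 ≤ k.2 j) ∧
        (((k.1 : ℝ) / (a₁ * t), fun j => (k.2 j : ℝ) / (a j * t)) ∈ Ω)} : ℝ))
      ≤ (t ^ m / a₁) * ∑' k : ℕ, f ((k + 1) / (a₁ * t)) := by
  classical
  obtain ⟨R₀, hR₀⟩ := isBounded_iff_forall_norm_le.mp hcomp.isBounded
  set R : ℝ := max R₀ 0 with hRdef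
  have hRnn : (0:ℝ) ≤ R := le_max_right _ _
  have hbound : ∀ x ∈ Ω, |x.1| ≤ R ∧ ∀ j, |x.2 j| ≤ R := by
    intro x hx
    have h : ‖x‖ ≤ R := (hR₀ x hx).trans (le_max_left _ _)
    refine ⟨?_, fun j => ?_⟩
    · calc |x.1| = ‖x.1‖ := (Real.norm_eq_abs _).symm
        _ ≤ ‖x‖ := norm_fst_le x
        _ ≤ R := h
    · calc |x.2 j| = ‖x.2 j‖ := (Real.norm_eq_abs _).symm
        _ ≤ ‖x.2‖ := norm_le_pi_norm x.2 j
        _ ≤ ‖x‖ := norm_snd_le x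
        _ ≤ R := h
  have hc₁ : (0:ℝ) < a₁ * t := mul_pos ha₁ ht
  have hc : ∀ j, (0:ℝ) < a j * t := fun j => mul_pos (ha j) ht
  set N₁ : ℕ := ⌈R * (a₁ * t)⌉₊ with hN₁def
  -- slice sets
  set Sl : ℕ → Set (Fin m → ℕ) := fun n =>
    {k' | (∀ j, 1 ≤ k' j) ∧
      (((n : ℝ) / (a₁ * t), fun j => (k' j : ℝ) / (a j * t)) ∈ Ω)} with hSldef
  have hSlfin : ∀ n, (Sl n).Finite := by
    intro n
    apply Set.Finite.subset
      (Finset.finite_toSet (Fintype.piFinset fun j => Finset.range (⌈R * (a j * t)⌉₊ + 1)))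
    intro k' hk'
    simp only [Finset.coe_sort_coe, Finset.mem_coe, Fintype.mem_piFinset, Finset.mem_range]
    intro j
    have hmem := hk'.2
    have hb := (hbound _ hmem).2 j
    simp only at hb
    have h1 : (k' j : ℝ) / (a j * t) ≤ R := le_trans (le_abs_self _) hb
    have h2 : (k' j : ℝ) ≤ R * (a j * t) := by
      rw [div_le_iff₀ (hc j)] at h1; exact h1
    have h3 : (k' j : ℝ) ≤ (⌈R * (a j * t)⌉₊ : ℝ) := h2.trans (Nat.le_ceil _)
    have : k' j ≤ ⌈R * (a j * t)⌉₊ := by exact_mod_cast h3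
    omega
  set Gf : ℕ → Finset (Fin m → ℕ) := fun n => (hSlfin n).toFinset with hGfdef
  set S : Set (ℕ × (Fin m → ℕ)) := {k : ℕ × (Fin m → ℕ) | 1 ≤ k.1 ∧ (∀ j, 1 ≤ k.2 j) ∧
        (((k.1 : ℝ) / (a₁ * t), fun j => (k.2 j : ℝ) / (a j * t)) ∈ Ω)} with hSdef
  -- each element of S has first coordinate between 1 and N₁
  have hfirst : ∀ k ∈ S, 1 ≤ k.1 ∧ k.1 ≤ N₁ := by
    intro k hk
    obtain ⟨h1, _, hmem⟩ := hk
    refine ⟨h1, ?_⟩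
    have hb := (hbound _ hmem).1
    simp only at hb
    have hle : (k.1 : ℝ) / (a₁ * t) ≤ R := le_trans (le_abs_self _) hb
    have h2 : (k.1 : ℝ) ≤ R * (a₁ * t) := by rw [div_le_iff₀ hc₁] at hle; exact hle
    have h3 : (k.1 : ℝ) ≤ (N₁ : ℝ) := h2.trans (Nat.le_ceil _)
    exact_mod_cast h3
  have hSfin : S.Finite := by
    apply Set.Finite.subset
      (Set.Finite.biUnion (Finset.finite_toSet (Finset.range N₁))
        (fun n _ => (hSlfin (n+1)).image (Prod.mk (n+1))))
    intro k hk
    obtain ⟨h1, hN⟩ := hfirst k hk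
    simp only [Set.mem_iUnion, Finset.mem_coe, Finset.mem_range]
    refine ⟨k.1 - 1, by omega, k.2, ?_, ?_⟩
    · have hk1 : k.1 - 1 + 1 = k.1 := by omega
      refine ⟨hk.2.1, ?_⟩
      rw [hk1]
      exact hk.2.2
    · have hk1 : k.1 - 1 + 1 = k.1 := by omega
      rw [hk1]
  -- finiteness of slice volumes
  have hfinv : ∀ x₁ : ℝ, volume {x' : Fin m → ℝ | (∀ j, 0 ≤ x' j) ∧ (x₁, x') ∈ Ω} ≠ ⊤ := by
    intro x₁
    have hsub : {x' : Fin m → ℝ | (∀ j, 0 ≤ x' j) ∧ (x₁, x') ∈ Ω} ⊆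
        Set.pi Set.univ fun _ => Set.Icc (0:ℝ) R := by
      intro x' hx'
      rw [Set.mem_univ_pi]
      intro j
      refine ⟨hx'.1 j, ?_⟩
      have := (hbound _ hx'.2).2 j
      simpa using le_trans (le_abs_self _) this
    have hcompact : IsCompact (Set.pi Set.univ fun _ : Fin m => Set.Icc (0:ℝ) R) :=
      isCompact_univ_pi fun _ => isCompact_Icc
    exact ne_top_of_le_ne_top hcompact.measure_lt_top.ne (measure_mono hsub)
  -- prod of 1/(a j * t)
  have hprod : ∏ j, (1 / (a j * t)) = a₁ / t ^ m := by
    rw [Finset.prod_div_distrib]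
    simp only [Finset.prod_const_one, Finset.prod_mul_distrib, Finset.prod_const,
      Finset.card_univ, Fintype.card_fin]
    have hpa : ∏ j, a j = 1 / a₁ := by
      field_simp at hdet ⊢
      linarith [hdet]
    rw [hpa]
    field_simp
  -- key per-slice bound
  have hkey : ∀ n : ℕ, ((Gf n).card : ℝ) ≤ (t ^ m / a₁) * f ((n : ℝ) / (a₁ * t)) := by
    intro n
    have h1 := slice_count hconv hsym ha ht ((n : ℝ) / (a₁ * t)) (Gf n)
      (fun k' hk' => by
        rw [hGfdef] at hk'
        simp only [Set.Finite.mem_toFinset] at hk'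
        exact hk') (hfinv _)
    rw [hprod, ← hf] at h1
    have hq : (0:ℝ) < a₁ / t ^ m := by positivity
    have h2 : ((Gf n).card : ℝ) ≤ f ((n : ℝ) / (a₁ * t)) / (a₁ / t ^ m) :=
      (le_div_iff₀ hq).mpr h1
    have h3 : f ((n : ℝ) / (a₁ * t)) / (a₁ / t ^ m) =
        (t ^ m / a₁) * f ((n : ℝ) / (a₁ * t)) := by
      field_simp
    rw [h3] at h2
    exact h2
  -- nonnegativity of f values
  have hnonneg : ∀ x₁ : ℝ, 0 ≤ f x₁ := fun x₁ => by rw [hf]; exact ENNReal.toReal_nonneg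
  -- vanishing of f beyond N₁
  have hvanish : ∀ n : ℕ, n ∉ Finset.range N₁ → f (((n : ℝ) + 1) / (a₁ * t)) = 0 := by
    intro n hn
    rw [Finset.mem_range, not_lt] at hn
    have hgt : R < ((n : ℝ) + 1) / (a₁ * t) := by
      rw [lt_div_iff₀ hc₁]
      have h1 : R * (a₁ * t) ≤ (N₁ : ℝ) := Nat.le_ceil _
      have h2 : (N₁ : ℝ) ≤ (n : ℝ) := by exact_mod_cast hn
      linarith
    have hempty : {x' : Fin m → ℝ | (∀ j, 0 ≤ x' j) ∧
        ((((n : ℝ) + 1) / (a₁ * t)), x') ∈ Ω} = ∅ := by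
      ext x'
      simp only [Set.mem_setOf_eq, Set.mem_empty_iff_false, iff_false, not_and]
      intro _ hmem
      have := (hbound _ hmem).1
      simp only at this
      have := le_trans (le_abs_self _) this
      linarith
    rw [hf, hempty]
    simp
  have hsummable : Summable (fun k : ℕ => f (((k : ℝ) + 1) / (a₁ * t))) :=
    summable_of_ne_finset_zero hvanish
  -- main counting chain
  have hcount : (S.ncard : ℝ) ≤ ∑ n ∈ Finset.range N₁, ((Gf (n+1)).card : ℝ) := by
    have hsubf : hSfin.toFinset ⊆
        (Finset.range N₁).biUnion (fun n => (Gf (n+1)).image (Prod.mk (n+1))) := by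
      intro k hk
      rw [Set.Finite.mem_toFinset] at hk
      obtain ⟨h1, hN⟩ := hfirst k hk
      rw [Finset.mem_biUnion]
      refine ⟨k.1 - 1, Finset.mem_range.mpr (by omega), ?_⟩
      rw [Finset.mem_image]
      refine ⟨k.2, ?_, ?_⟩
      · rw [hGfdef]
        simp only [Set.Finite.mem_toFinset]
        have hk1 : k.1 - 1 + 1 = k.1 := by omega
        refine ⟨hk.2.1, ?_⟩
        rw [hk1]
        exact hk.2.2
      · have hk1 : k.1 - 1 + 1 = k.1 := by omega
        rw [hk1]
    have h1 : S.ncard = hSfin.toFinset.card := Set.ncard_eq_toFinset_card S hSfin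
    have h2 : hSfin.toFinset.card ≤
        ∑ n ∈ Finset.range N₁, ((Gf (n+1)).image (Prod.mk (n+1))).card :=
      le_trans (Finset.card_le_card hsubf) (Finset.card_biUnion_le)
    have h3 : ∀ n, ((Gf (n+1)).image (Prod.mk (n+1))).card ≤ (Gf (n+1)).card :=
      fun n => Finset.card_image_le
    have h4 : S.ncard ≤ ∑ n ∈ Finset.range N₁, (Gf (n+1)).card := by
      rw [h1]
      exact le_trans h2 (Finset.sum_le_sum fun n _ => h3 n)
    calc (S.ncard : ℝ) ≤ (∑ n ∈ Finset.range N₁, (Gf (n+1)).card : ℕ) := by exact_mod_cast h4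
      _ = ∑ n ∈ Finset.range N₁, ((Gf (n+1)).card : ℝ) := by push_cast; rfl
  have hchain : (S.ncard : ℝ) ≤
      (t ^ m / a₁) * ∑ n ∈ Finset.range N₁, f (((n : ℝ) + 1) / (a₁ * t)) := by
    rw [Finset.mul_sum]
    refine hcount.trans (Finset.sum_le_sum fun n _ => ?_)
    have := hkey (n+1)
    convert this using 3
    push_cast
    all_goals norm_num
    rfl
  have htsum : ∑ n ∈ Finset.range N₁, f (((n : ℝ) + 1) / (a₁ * t)) ≤
      ∑' k : ℕ, f (((k : ℝ) + 1) / (a₁ * t)) :=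
    Summable.sum_le_tsum (Finset.range N₁) (fun n _ => hnonneg _) hsummable
  have hfinal := hchain.trans (mul_le_mul_of_nonneg_left htsum (by positivity))
  exact hfinal
end

section
/- For positive even integers ω₁, ..., ω_d, the volume of 𝒟 ∩ ℝ₊^d, where 𝒟 = {x ∈ ℝ^d : x₁^{ω₁} + ⋯ + x_d^{ω_d} ≤ 1}, equals (∑_{l=1}^d (ω₁⋯ω_d)/ω_l)^{−1} · Γ(1/ω₁)⋯Γ(1/ω_d) / Γ(∑_{l=1}^d 1/ω_l). -/
open MeasureTheory Finset

theorem stmt9 (d : ℕ) (hd : 1 ≤ d) (ω : Fin d → ℕ)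
    (hpos : ∀ l, 0 < ω l) (heven : ∀ l, Even (ω l)) :
    (volume {x : Fin d → ℝ | (∀ l, 0 ≤ x l) ∧ ∑ l, x l ^ ω l ≤ 1}).toReal =
      (∑ l, (∏ i, (ω i : ℝ)) / (ω l : ℝ))⁻¹ *
        (∏ l, Real.Gamma (1 / (ω l : ℝ))) / Real.Gamma (∑ l, 1 / (ω l : ℝ)) := by
  have hw : ∀ l, (0:ℝ) < (ω l : ℝ) := fun l => by exact_mod_cast hpos l
  set s : ℝ := ∑ l, 1 / (ω l : ℝ) with hs_def
  have hs : 0 < s := Finset.sum_pos (fun l _ => one_div_pos.mpr (hw l)) ⟨⟨0, hd⟩, mem_univ _⟩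
  set g : (Fin d → ℝ) → ℝ := fun x => ∑ l, x l ^ ω l with hg_def
  have hgm : Measurable g :=
    Finset.measurable_sum _ (fun l _ => (measurable_pi_apply l).pow_const _)
  set S : Set (Fin d → ℝ) := {x | (∀ l, 0 ≤ x l) ∧ g x ≤ 1} with hS_def
  have hP : MeasurableSet {x : Fin d → ℝ | ∀ l, 0 ≤ x l} := by
    rw [Set.setOf_forall]
    exact MeasurableSet.iInter fun l =>
      measurableSet_le measurable_const (measurable_pi_apply l)
  -- scaling lemma
  have hA : ∀ t : ℝ, 0 < t →
      volume {x : Fin d → ℝ | (∀ l, 0 ≤ x l) ∧ g x ≤ t}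
        = ENNReal.ofReal (t ^ s) * volume S := by
    intro t ht
    set T := Matrix.toLin' (Matrix.diagonal (fun l : Fin d => t ^ (1 / (ω l : ℝ)))) with hT
    have hdet : LinearMap.det T = t ^ s := by
      rw [hT, LinearMap.det_toLin', Matrix.det_diagonal]
      rw [hs_def]
      simp only [Real.rpow_def_of_pos ht, ← Real.exp_sum, ← Finset.mul_sum]
    have hpre : T ⁻¹' {x | (∀ l, 0 ≤ x l) ∧ g x ≤ t} = S := by
      ext x
      have hTx : ∀ l, T x l = t ^ (1 / (ω l : ℝ)) * x l := fun l => by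
        simp [hT, Matrix.toLin'_apply, Matrix.mulVec_diagonal]
      have hpow : ∀ l, (t ^ (1 / (ω l : ℝ)) * x l) ^ ω l = t * x l ^ ω l := by
        intro l
        rw [mul_pow, ← Real.rpow_natCast (t ^ (1 / (ω l : ℝ))) (ω l),
          ← Real.rpow_mul ht.le, one_div_mul_cancel (hw l).ne', Real.rpow_one]
      simp only [Set.mem_preimage, Set.mem_setOf_eq, hS_def, hg_def, hTx, hpow]
      constructor
      · rintro ⟨h1, h2⟩
        refine ⟨fun l => ?_, ?_⟩
        · have := h1 l
          nlinarith [Real.rpow_pos_of_pos ht (1 / (ω l : ℝ))]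
        · rw [← Finset.mul_sum] at h2
          exact (mul_le_iff_le_one_right ht).mp h2
      · rintro ⟨h1, h2⟩
        refine ⟨fun l => mul_nonneg (Real.rpow_pos_of_pos ht _).le (h1 l), ?_⟩
        rw [← Finset.mul_sum]
        exact (mul_le_iff_le_one_right ht).mpr h2
    have hts : (0:ℝ) < t ^ s := Real.rpow_pos_of_pos ht s
    have h0 : LinearMap.det T ≠ 0 := by rw [hdet]; exact hts.ne'
    have hpreim := Measure.addHaar_preimage_linearMap (volume : Measure (Fin d → ℝ)) h0
      {x | (∀ l, 0 ≤ x l) ∧ g x ≤ t}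
    rw [hpre, hdet] at hpreim
    rw [hpreim, ← mul_assoc, abs_of_pos (inv_pos.mpr hts), ← ENNReal.ofReal_mul hts.le,
      mul_inv_cancel₀ hts.ne', ENNReal.ofReal_one, one_mul]
  -- product side
  have f_int : ∀ l : Fin d, Integrable
      (fun y : ℝ => Set.indicator (Set.Ici 0) (fun y => Real.exp (-(y ^ ω l))) y) := by
    intro l
    have h1 : (1:ℝ) ≤ (ω l : ℝ) := by exact_mod_cast hpos l
    have hio : IntegrableOn (fun y : ℝ => Real.exp (-(y ^ ω l))) (Set.Ioi 0) := by
      have := integrableOn_rpow_mul_exp_neg_rpow (s := 0) (p := (ω l : ℝ)) (by norm_num) (hw l)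
      simpa [Real.rpow_natCast] using this
    rw [integrable_indicator_iff measurableSet_Ici]
    exact Iff.mpr integrableOn_Ici_iff_integrableOn_Ioi hio
  have f_val : ∀ l : Fin d,
      (∫ y : ℝ, Set.indicator (Set.Ici 0) (fun y => Real.exp (-(y ^ ω l))) y)
        = Real.Gamma (1 / (ω l : ℝ) + 1) := by
    intro l
    rw [integral_indicator measurableSet_Ici, integral_Ici_eq_integral_Ioi,
      ← integral_exp_neg_rpow (hw l)]
    refine setIntegral_congr_fun measurableSet_Ioi (fun y hy => ?_)
    rw [Real.rpow_natCast]
  have h_eq : ∀ x : Fin d → ℝ,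
      Set.indicator {x : Fin d → ℝ | ∀ l, 0 ≤ x l} (fun x => Real.exp (-g x)) x
        = ∏ l, Set.indicator (Set.Ici 0) (fun y => Real.exp (-(y ^ ω l))) (x l) := by
    intro x
    by_cases hx : ∀ l, 0 ≤ x l
    · rw [Set.indicator_of_mem (show x ∈ {x : Fin d → ℝ | ∀ l, 0 ≤ x l} from hx),
        Finset.prod_congr rfl (fun l _ => Set.indicator_of_mem (Set.mem_Ici.mpr (hx l)) _),
        ← Real.exp_sum]
      congr 1
      simp [hg_def]
    · rw [Set.indicator_of_notMem (show x ∉ {x : Fin d → ℝ | ∀ l, 0 ≤ x l} from hx)]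
      push_neg at hx
      obtain ⟨l, hl⟩ := hx
      exact (Finset.prod_eq_zero (mem_univ l)
        (Set.indicator_of_notMem (show x l ∉ Set.Ici (0:ℝ) from not_le.mpr hl) _)).symm
  have key1 : (∫⁻ x : Fin d → ℝ in {x | ∀ l, 0 ≤ x l}, ENNReal.ofReal (Real.exp (-g x)))
      = ENNReal.ofReal (∏ l, Real.Gamma (1 / (ω l : ℝ) + 1)) := by
    rw [← lintegral_indicator hP]
    have e1 : ∀ x, Set.indicator {x : Fin d → ℝ | ∀ l, 0 ≤ x l}
        (fun x => ENNReal.ofReal (Real.exp (-g x))) x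
        = ENNReal.ofReal (Set.indicator {x : Fin d → ℝ | ∀ l, 0 ≤ x l}
            (fun x => Real.exp (-g x)) x) := by
      intro x
      by_cases hx : x ∈ {x : Fin d → ℝ | ∀ l, 0 ≤ x l}
      · simp [Set.indicator_of_mem hx]
      · simp [Set.indicator_of_notMem hx]
    simp_rw [e1, h_eq]
    rw [volume_pi]
    rw [← MeasureTheory.ofReal_integral_eq_lintegral_ofReal
      (Integrable.fintype_prod f_int)
      (Filter.Eventually.of_forall fun x => Finset.prod_nonneg fun l _ =>
        Set.indicator_nonneg (fun y _ => (Real.exp_pos _).le) _)]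
    rw [MeasureTheory.integral_fintype_prod_eq_prod
      (f := fun l (y : ℝ) => Set.indicator (Set.Ici 0) (fun y => Real.exp (-(y ^ ω l))) y)]
    rw [Finset.prod_congr rfl fun l _ => f_val l]
  -- layer cake side
  have key2 : (∫⁻ x : Fin d → ℝ in {x | ∀ l, 0 ≤ x l}, ENNReal.ofReal (Real.exp (-g x)))
      = ENNReal.ofReal (Real.Gamma (s + 1)) * volume S := by
    set F : (Fin d → ℝ) → ℝ → ENNReal := fun x t =>
      Set.indicator (Set.Ici (g x)) (fun t => ENNReal.ofReal (Real.exp (-t))) t with hF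
    have ha : ∀ x : Fin d → ℝ, 0 ≤ g x →
        (∫⁻ t in Set.Ioi (0:ℝ), F x t) = ENNReal.ofReal (Real.exp (-g x)) := by
      intro x hx
      rw [hF]
      rw [lintegral_indicator measurableSet_Ici, Measure.restrict_restrict measurableSet_Ici]
      have hae : (Set.Ici (g x) ∩ Set.Ioi 0 : Set ℝ) =ᵐ[volume] Set.Ioi (g x) := by
        rw [MeasureTheory.ae_eq_set]
        constructor
        · refine measure_mono_null (fun y hy => ?_) (Real.volume_singleton (a := g x))
          obtain ⟨⟨h1, h2⟩, h3⟩ := hy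
          simp only [Set.mem_Ioi, not_lt] at h3
          exact le_antisymm h3 h1
        · refine measure_mono_null (fun y hy => ?_) (measure_empty (μ := volume))
          obtain ⟨h1, h2⟩ := hy
          exact absurd ⟨Set.mem_Ici.mpr (le_of_lt h1), Set.mem_Ioi.mpr (lt_of_le_of_lt hx h1)⟩ h2
      rw [Measure.restrict_congr_set hae]
      have hint : IntegrableOn (fun t : ℝ => Real.exp (-t)) (Set.Ioi (g x)) := by
        simpa using exp_neg_integrableOn_Ioi (g x) (one_pos (α := ℝ))
      rw [← MeasureTheory.ofReal_integral_eq_lintegral_ofReal hint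
        (Filter.Eventually.of_forall fun t => (Real.exp_pos _).le),
        integral_exp_neg_Ioi]
    have hmeas : Measurable (Function.uncurry F) := by
      have huF : Function.uncurry F = Set.indicator {p : (Fin d → ℝ) × ℝ | g p.1 ≤ p.2}
          (fun p => ENNReal.ofReal (Real.exp (-p.2))) := by
        ext p
        simp [Function.uncurry, hF, Set.indicator_apply, Set.mem_Ici]
      rw [huF]
      exact Measurable.indicator
        ((Real.measurable_exp.comp measurable_snd.neg).ennreal_ofReal)
        (measurableSet_le (hgm.comp measurable_fst) measurable_snd)
    have hg0 : ∀ x : Fin d → ℝ, x ∈ {x : Fin d → ℝ | ∀ l, 0 ≤ x l} → 0 ≤ g x := by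
      intro x hx
      exact Finset.sum_nonneg fun l _ => pow_nonneg (hx l) _
    calc (∫⁻ x : Fin d → ℝ in {x | ∀ l, 0 ≤ x l}, ENNReal.ofReal (Real.exp (-g x)))
        = ∫⁻ x : Fin d → ℝ in {x | ∀ l, 0 ≤ x l}, ∫⁻ t in Set.Ioi (0:ℝ), F x t := by
          refine setLIntegral_congr_fun hP (fun x hx => ?_)
          exact (ha x (hg0 x hx)).symm
      _ = ∫⁻ t in Set.Ioi (0:ℝ), ∫⁻ x : Fin d → ℝ in {x | ∀ l, 0 ≤ x l}, F x t :=
          lintegral_lintegral_swap hmeas.aemeasurable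
      _ = ∫⁻ t in Set.Ioi (0:ℝ),
            ENNReal.ofReal (Real.exp (-t) * t ^ s) * volume S := by
          refine setLIntegral_congr_fun measurableSet_Ioi
            (fun t ht => ?_)
          have hFt : ∀ x : Fin d → ℝ, F x t
              = Set.indicator {x : Fin d → ℝ | g x ≤ t}
                  (fun _ => ENNReal.ofReal (Real.exp (-t))) x := by
            intro x
            simp [hF, Set.indicator_apply, Set.mem_Ici]
          simp_rw [hFt]
          rw [lintegral_indicator (measurableSet_le hgm measurable_const), setLIntegral_const,
            Measure.restrict_apply (measurableSet_le hgm measurable_const)]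
          have hset : {x : Fin d → ℝ | g x ≤ t} ∩ {x | ∀ l, 0 ≤ x l}
              = {x : Fin d → ℝ | (∀ l, 0 ≤ x l) ∧ g x ≤ t} := by
            ext x; simp [and_comm]
          rw [hset, hA t ht, ← mul_assoc, ← ENNReal.ofReal_mul (Real.exp_pos _).le]
      _ = (∫⁻ t in Set.Ioi (0:ℝ), ENNReal.ofReal (Real.exp (-t) * t ^ s)) * volume S := by
          rw [lintegral_mul_const]
          fun_prop
      _ = ENNReal.ofReal (Real.Gamma (s + 1)) * volume S := by
          congr 1
          have hconv : IntegrableOn (fun t : ℝ => Real.exp (-t) * t ^ s) (Set.Ioi 0) := by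
            have := Real.GammaIntegral_convergent (s := s + 1) (by linarith)
            simpa using this
          rw [← MeasureTheory.ofReal_integral_eq_lintegral_ofReal hconv ?_,
            Real.Gamma_eq_integral (by linarith : (0:ℝ) < s + 1)]
          · simp
          · refine (MeasureTheory.ae_restrict_iff' measurableSet_Ioi).mpr
              (Filter.Eventually.of_forall fun t ht => ?_)
            have : (0:ℝ) < t := ht
            positivity
  -- finiteness
  have hfin : volume S ≠ ⊤ := by
    have hsub : S ⊆ Set.pi Set.univ fun _ : Fin d => Set.Icc (0:ℝ) 1 := by
      rintro x ⟨hx0, hx1⟩ l _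
      refine ⟨hx0 l, ?_⟩
      have h1 : x l ^ ω l ≤ 1 :=
        le_trans (Finset.single_le_sum (fun i _ => pow_nonneg (hx0 i) _) (mem_univ l)) hx1
      exact (pow_le_one_iff_of_nonneg (hx0 l) (hpos l).ne').mp h1
    refine ne_top_of_le_ne_top ?_ (measure_mono hsub)
    rw [volume_pi_pi]
    simp [Real.volume_Icc]
  -- combine
  have main := key1.symm.trans key2
  rw [← ENNReal.ofReal_toReal hfin, ← ENNReal.ofReal_mul (Real.Gamma_pos_of_pos
    (by linarith : (0:ℝ) < s + 1)).le] at main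
  have hGamma_pos : ∀ l : Fin d, 0 < Real.Gamma (1 / (ω l : ℝ) + 1) := fun l =>
    Real.Gamma_pos_of_pos (by positivity)
  have hreal : (∏ l, Real.Gamma (1 / (ω l : ℝ) + 1))
      = Real.Gamma (s + 1) * (volume S).toReal := by
    rw [ENNReal.ofReal_eq_ofReal_iff
      (Finset.prod_nonneg fun l _ => (hGamma_pos l).le)
      (mul_nonneg (Real.Gamma_pos_of_pos (by linarith : (0:ℝ) < s + 1)).le
        ENNReal.toReal_nonneg)] at main
    exact main
  -- final algebra
  have hGadd : ∀ l : Fin d, Real.Gamma (1 / (ω l : ℝ) + 1)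
      = (1 / (ω l : ℝ)) * Real.Gamma (1 / (ω l : ℝ)) := fun l =>
    Real.Gamma_add_one (one_div_pos.mpr (hw l)).ne'
  have hGs : Real.Gamma (s + 1) = s * Real.Gamma s := Real.Gamma_add_one hs.ne'
  have hprod : (∏ l, Real.Gamma (1 / (ω l : ℝ) + 1))
      = (∏ l, (ω l : ℝ))⁻¹ * ∏ l, Real.Gamma (1 / (ω l : ℝ)) := by
    rw [Finset.prod_congr rfl fun l _ => hGadd l, Finset.prod_mul_distrib]
    congr 1
    rw [← Finset.prod_inv_distrib]
    exact Finset.prod_congr rfl fun l _ => one_div _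
  have hsum : (∑ l, (∏ i, (ω i : ℝ)) / (ω l : ℝ)) = (∏ i, (ω i : ℝ)) * s := by
    rw [hs_def, Finset.mul_sum]
    exact Finset.sum_congr rfl fun l _ => by rw [mul_one_div]
  have hP0 : (0:ℝ) < ∏ i, (ω i : ℝ) := Finset.prod_pos fun i _ => hw i
  have hGs0 : (0:ℝ) < Real.Gamma s := Real.Gamma_pos_of_pos hs
  rw [hprod, hGs] at hreal
  rw [hsum]
  have : (volume S).toReal = ((∏ i, (ω i : ℝ)) * s)⁻¹
      * (∏ l, Real.Gamma (1 / (ω l : ℝ))) / Real.Gamma s := by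
    field_simp at hreal ⊢
    nlinarith [hreal]
  exact this
end

section
/- Let f : [0,∞) → [0,∞) be continuous, nonincreasing, supported in [0, X₁], and suppose f is concave up (f'' ≥ 0) on an interval [p − δ, p + δ] ⊂ (0, X₁) with δ > 0. If s ≥ 2/δ, then ∫₀^∞ f(x/s) dx − ∑_{k=1}^∞ f(k/s) ≥ (1/2)(f(p − δ/2) − f(p + δ/2)). -/
open MeasureTheory Set

set_option maxHeartbeats 1000000 in
theorem stmt14 (f : ℝ → ℝ) (X₁ p δ : ℝ) (hδ : 0 < δ)
    (hcont : ContinuousOn f (Ici 0))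
    (hnonneg : ∀ x, 0 ≤ x → 0 ≤ f x)
    (hanti : AntitoneOn f (Ici 0))
    (hsupp : ∀ x, X₁ ≤ x → f x = 0)
    (hsub : Icc (p - 2 * δ) (p + 2 * δ) ⊆ Ioo 0 X₁)
    (hdiff : ∀ x ∈ Icc (p - 2 * δ) (p + 2 * δ), DifferentiableAt ℝ f x)
    (hdiff2 : ∀ x ∈ Icc (p - 2 * δ) (p + 2 * δ), DifferentiableAt ℝ (deriv f) x)
    (hconv : ∀ x ∈ Icc (p - 2 * δ) (p + 2 * δ), 0 ≤ deriv (deriv f) x)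
    (s : ℝ) (hs : 2 / δ ≤ s) :
    (1 / 2) * (f (p - δ / 2) - f (p + δ / 2))
      ≤ (∫ x in Ioi (0 : ℝ), f (x / s)) - ∑' k : ℕ, f ((k + 1) / s) := by
  have hs0 : (0:ℝ) < s := lt_of_lt_of_le (by positivity) hs
  have hsδ : 2 ≤ s * δ := by
    rw [div_le_iff₀ hδ] at hs; linarith
  have hp2 : 0 < p - 2 * δ := (hsub (left_mem_Icc.mpr (by linarith))).1
  have hpX : p + 2 * δ < X₁ := (hsub (right_mem_Icc.mpr (by linarith))).2
  -- convexity of f on the central interval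
  have hconvf : ConvexOn ℝ (Icc (p - 2 * δ) (p + 2 * δ)) f := by
    apply convexOn_of_deriv2_nonneg' (convex_Icc _ _)
    · exact fun x hx => (hdiff x hx).differentiableWithinAt
    · exact fun x hx => (hdiff2 x hx).differentiableWithinAt
    · intro x hx
      show 0 ≤ deriv (deriv f) x
      exact hconv x hx
  -- index bounds
  set m : ℕ := ⌊s * (p - δ / 2)⌋₊ with hm
  have hm3 : 3 ≤ m := by
    apply Nat.le_floor
    have : (3:ℝ) ≤ s * (3 * δ / 2) := by nlinarith
    nlinarith
  set a : ℕ := m - 1 with ha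
  set b : ℕ := ⌈s * (p + δ / 2)⌉₊ - 1 with hb
  have ha1 : (a:ℝ) + 1 ≤ s * (p - δ / 2) := by
    have h1 : ((a + 1 : ℕ) : ℝ) ≤ s * (p - δ / 2) := by
      have : a + 1 = m := by omega
      rw [this]
      exact Nat.floor_le (by nlinarith)
    push_cast at h1; linarith
  have ha0 : s * (p - 2 * δ) ≤ (a:ℝ) := by
    have h1 : s * (p - δ / 2) < (m:ℝ) + 1 := Nat.lt_floor_add_one _
    have h2 : (a:ℝ) = (m:ℝ) - 1 := by
      have : ((a : ℕ) : ℝ) = ((m:ℕ):ℝ) - 1 := by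
        have : (m : ℕ) = a + 1 := by omega
        rw [this]; push_cast; ring
      linarith [this]
    nlinarith
  have hbceil : b + 1 = ⌈s * (p + δ / 2)⌉₊ := by
    have : 1 ≤ ⌈s * (p + δ / 2)⌉₊ := by
      apply Nat.one_le_ceil_iff.mpr
      nlinarith
    omega
  have hb1 : s * (p + δ / 2) ≤ (b:ℝ) + 1 := by
    have := Nat.le_ceil (s * (p + δ / 2))
    rw [← hbceil] at this
    push_cast at this; linarith
  have hb2 : (b:ℝ) + 2 ≤ s * (p + 2 * δ) := by
    have h1 : (⌈s * (p + δ / 2)⌉₊ : ℝ) < s * (p + δ / 2) + 1 :=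
      Nat.ceil_lt_add_one (by nlinarith)
    rw [← hbceil] at h1
    push_cast at h1
    nlinarith
  have hab : a ≤ b := by
    have : (a:ℝ) + 1 ≤ (b:ℝ) + 1 := by nlinarith
    exact_mod_cast (by linarith : (a:ℝ) ≤ (b:ℝ))
  set N : ℕ := max ⌈s * X₁⌉₊ (b + 2) with hN
  have hNX : s * X₁ ≤ (N:ℝ) := by
    calc s * X₁ ≤ (⌈s * X₁⌉₊ : ℝ) := Nat.le_ceil _
    _ ≤ (N:ℝ) := by exact_mod_cast Nat.cast_le.mpr (le_max_left _ _)
  have hbN : b + 2 ≤ N := le_max_right _ _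
  -- the scaled function
  set F : ℝ → ℝ := fun x => f (x / s) with hF
  have hFcont : ContinuousOn F (Ici 0) := by
    apply hcont.comp (continuous_id.div_const s).continuousOn
    intro x hx
    exact div_nonneg hx hs0.le
  have hFint : ∀ c d : ℝ, 0 ≤ c → IntegrableOn F (Ioc c d) := by
    intro c d hc
    rcases le_or_gt c d with h | h
    · exact ((hFcont.mono (Icc_subset_Ici_self.trans (Ici_subset_Ici.mpr hc))).integrableOn_Icc).mono_set
        Ioc_subset_Icc_self
    · simp [Ioc_eq_empty (not_lt.mpr h.le)]
  have hFzero : ∀ x : ℝ, (N:ℝ) ≤ x → F x = 0 := by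
    intro x hx
    apply hsupp
    rw [le_div_iff₀ hs0]
    calc X₁ * s = s * X₁ := by ring
    _ ≤ (N:ℝ) := hNX
    _ ≤ x := hx
  -- integrability on Ioi 0
  have hIoiN : IntegrableOn F (Ioi (N:ℝ)) := by
    apply (integrableOn_congr_fun (fun x hx => (hFzero x (le_of_lt hx)).symm)
      measurableSet_Ioi).mp
    exact integrableOn_zero
  have hunion : Ioc (0:ℝ) (N:ℝ) ∪ Ioi (N:ℝ) = Ioi (0:ℝ) :=
    Ioc_union_Ioi_eq_Ioi (by positivity)
  have hFintIoi : IntegrableOn F (Ioi (0:ℝ)) := by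
    rw [← hunion]
    exact (hFint 0 N le_rfl).union hIoiN
  -- step 1: integral over Ioi 0 equals finite sum of unit-interval integrals
  have key1 : ∫ x in Ioi (0:ℝ), F x
      = ∑ k ∈ Finset.range N, ∫ x in Ioc (k:ℝ) ((k:ℝ)+1), F x := by
    have h1 : ∫ x in Ioi (0:ℝ), F x = ∫ x in Ioc (0:ℝ) (N:ℝ), F x := by
      have hzero : ∫ x in Ioi (N:ℝ), F x = 0 :=
        setIntegral_eq_zero_of_forall_eq_zero (fun x hx => hFzero x (le_of_lt hx))
      rw [← hunion, setIntegral_union (Ioc_disjoint_Ioi le_rfl) measurableSet_Ioi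
        (hFint 0 N le_rfl) hIoiN, hzero, add_zero]
    rw [h1]
    have h2 : ∀ k : ℕ, k < N → IntervalIntegrable F volume ((k:ℝ)) ((k:ℝ)+1) := by
      intro k _
      rw [intervalIntegrable_iff_integrableOn_Ioc_of_le (by linarith [Nat.cast_nonneg (α := ℝ) k])]
      exact hFint _ _ (Nat.cast_nonneg k)
    have h3 := intervalIntegral.sum_integral_adjacent_intervals
      (a := fun k : ℕ => (k:ℝ)) (μ := volume) (f := F) (n := N) (fun k hk => by
        simpa using h2 k hk)
    have h4 : ∫ x in Ioc (0:ℝ) (N:ℝ), F x = ∫ x in (0:ℝ)..(N:ℝ), F x := by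
      rw [intervalIntegral.integral_of_le (Nat.cast_nonneg N)]
    rw [h4, ← Nat.cast_zero, ← h3]
    apply Finset.sum_congr rfl
    intro k _
    rw [intervalIntegral.integral_of_le (by push_cast; linarith [Nat.cast_nonneg (α := ℝ) k])]
    push_cast
    ring_nf
  -- step 2: the tsum is a finite sum
  have key2 : ∑' k : ℕ, f ((k + 1) / s) = ∑ k ∈ Finset.range N, f (((k:ℝ) + 1) / s) := by
    apply tsum_eq_sum
    intro k hk
    rw [Finset.mem_range, not_lt] at hk
    apply hsupp
    rw [le_div_iff₀ hs0]
    have : (N:ℝ) ≤ (k:ℝ) + 1 := by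
      have : (N:ℝ) ≤ (k:ℝ) := Nat.cast_le.mpr hk
      linarith
    calc X₁ * s = s * X₁ := by ring
    _ ≤ (N:ℝ) := hNX
    _ ≤ (k:ℝ) + 1 := this
  -- gap nonnegativity
  have hgap0 : ∀ k : ℕ, f (((k:ℝ) + 1) / s) ≤ ∫ x in Ioc (k:ℝ) ((k:ℝ)+1), F x := by
    intro k
    have hconst : ∫ x in Ioc (k:ℝ) ((k:ℝ)+1), f (((k:ℝ) + 1) / s)
        = f (((k:ℝ) + 1) / s) := by
      rw [setIntegral_const]
      rw [Real.volume_real_Ioc]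
      simp
    rw [← hconst]
    apply setIntegral_mono_on (integrableOn_const (by simp)) (hFint _ _ (Nat.cast_nonneg k))
      measurableSet_Ioc
    intro x hx
    apply hanti
    · exact div_nonneg (le_of_lt (lt_of_le_of_lt (Nat.cast_nonneg k) hx.1)) hs0.le
    · exact div_nonneg (by positivity) hs0.le
    · exact (div_le_div_iff_of_pos_right hs0).mpr hx.2
  -- gap lower bound on middle indices
  have hgap : ∀ k ∈ Finset.Icc a b,
      f (((k:ℝ) + 1) / s) + (f (((k:ℝ) + 1) / s) - f (((k:ℝ) + 2) / s)) / 2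
        ≤ ∫ x in Ioc (k:ℝ) ((k:ℝ)+1), F x := by
    intro k hk
    rw [Finset.mem_Icc] at hk
    have hka : (a:ℝ) ≤ (k:ℝ) := Nat.cast_le.mpr hk.1
    have hkb : (k:ℝ) ≤ (b:ℝ) := Nat.cast_le.mpr hk.2
    set A : ℝ := ((k:ℝ) + 1) / s with hA
    set B : ℝ := ((k:ℝ) + 2) / s with hB
    set c : ℝ := f A - f B with hc
    have hABlt : A < B := by
      rw [hA, hB]
      exact (div_lt_div_iff_of_pos_right hs0).mpr (by linarith)
    have hmemB : B ∈ Icc (p - 2*δ) (p + 2*δ) := by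
      constructor
      · rw [hB, le_div_iff₀ hs0]; nlinarith
      · rw [hB, div_le_iff₀ hs0]; nlinarith
    have hpoint : ∀ x ∈ Ioc (k:ℝ) ((k:ℝ)+1),
        f A + c * (((k:ℝ)+1) - x) ≤ F x := by
      intro x hx
      have hxk : (k:ℝ) < x := hx.1
      have hxk1 : x ≤ (k:ℝ) + 1 := hx.2
      set u : ℝ := x / s with hu
      have hmemu : u ∈ Icc (p - 2*δ) (p + 2*δ) := by
        constructor
        · rw [hu, le_div_iff₀ hs0]; nlinarith
        · rw [hu, div_le_iff₀ hs0]; nlinarith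
      have hmemA : A ∈ Icc (p - 2*δ) (p + 2*δ) := by
        constructor
        · rw [hA, le_div_iff₀ hs0]; nlinarith
        · rw [hA, div_le_iff₀ hs0]; nlinarith
      rcases eq_or_lt_of_le hxk1 with heq | hlt
      · have : u = A := by rw [hu, hA, heq]
        rw [hF]
        simp only
        rw [← hu, this]
        have : ((k:ℝ)+1) - x = 0 := by rw [heq]; ring
        rw [this]; ring_nf; exact le_refl _
      · have huA : u < A := by
          rw [hu, hA]; exact div_lt_div_of_pos_right hlt hs0 |> fun h => by
            apply div_lt_div_of_pos_right hlt hs0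
        have hslope := hconvf.slope_mono_adjacent hmemu hmemB huA hABlt
        have hAu : 0 < A - u := by linarith
        have hBA : B - A = 1 / s := by rw [hA, hB]; field_simp; ring
        have hAux : A - u = (((k:ℝ)+1) - x) / s := by rw [hA, hu]; field_simp
        rw [div_le_div_iff₀ hAu (by linarith : (0:ℝ) < B - A)] at hslope
        -- (f A - f u) * (B - A) ≤ (f B - f A) * (A - u)
        rw [hF]; simp only [← hu]
        have h1 : (f A - f u) * (1/s) ≤ (f B - f A) * ((((k:ℝ)+1) - x) / s) := by
          rw [← hBA, ← hAux]; exact hslope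
        have h2 : (f A - f u) ≤ (f B - f A) * (((k:ℝ)+1) - x) := by
          have := mul_le_mul_of_nonneg_right h1 hs0.le
          field_simp at this
          nlinarith [this]
        rw [hc]; nlinarith [h2]
    -- integrate the linear lower bound
    have hlin : ∫ x in Ioc (k:ℝ) ((k:ℝ)+1), (f A + c * (((k:ℝ)+1) - x))
        = f A + c / 2 := by
      have hle : (k:ℝ) ≤ (k:ℝ) + 1 := by linarith
      rw [← intervalIntegral.integral_of_le hle]
      have : IntervalIntegrable (fun x => f A + c * (((k:ℝ)+1) - x)) volume (k:ℝ) ((k:ℝ)+1) := by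
        apply Continuous.intervalIntegrable; fun_prop
      rw [intervalIntegral.integral_add (by apply Continuous.intervalIntegrable; fun_prop)
        (by apply Continuous.intervalIntegrable; fun_prop)]
      rw [intervalIntegral.integral_const]
      rw [intervalIntegral.integral_const_mul]
      rw [intervalIntegral.integral_sub (by apply Continuous.intervalIntegrable; fun_prop)
        (by apply Continuous.intervalIntegrable; fun_prop)]
      rw [intervalIntegral.integral_const, integral_id]
      simp only [smul_eq_mul]
      ring_nf
    calc f A + c / 2 = ∫ x in Ioc (k:ℝ) ((k:ℝ)+1), (f A + c * (((k:ℝ)+1) - x)) := hlin.symm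
    _ ≤ ∫ x in Ioc (k:ℝ) ((k:ℝ)+1), F x := by
        apply setIntegral_mono_on ?_ (hFint _ _ (Nat.cast_nonneg k)) measurableSet_Ioc hpoint
        apply Continuous.integrableOn_Ioc; fun_prop
  -- telescoping
  set g : ℕ → ℝ := fun k => f (((k:ℝ) + 1) / s) with hg
  have htel : ∑ k ∈ Finset.Icc a b, (g k - g (k+1)) = g a - g (b+1) := by
    rw [← Finset.Ico_add_one_right_eq_Icc, Finset.sum_Ico_eq_sum_range]
    have hrw : b + 1 - a = (b - a) + 1 := by omega
    rw [hrw]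
    have := Finset.sum_range_sub' (fun i => g (a + i)) (b - a + 1)
    simp only [add_zero] at this
    calc ∑ i ∈ Finset.range (b - a + 1), (g (a + i) - g (a + i + 1))
        = ∑ i ∈ Finset.range (b - a + 1), (g (a + i) - g (a + (i + 1))) := by
          apply Finset.sum_congr rfl; intro i _; ring_nf
      _ = g (a + 0) - g (a + (b - a + 1)) := this
      _ = g a - g (b+1) := by
          rw [add_zero]
          congr 1
          rw [← add_assoc, Nat.add_sub_cancel' hab]
  -- final assembly
  rw [key1, key2, ← Finset.sum_sub_distrib]
  have hsubset : Finset.Icc a b ⊆ Finset.range N := by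
    intro k hk
    rw [Finset.mem_Icc] at hk
    rw [Finset.mem_range]
    exact lt_of_le_of_lt hk.2 (lt_of_lt_of_le (Nat.lt_add_of_pos_right (by norm_num)) hbN)
  have hstep : ∑ k ∈ Finset.Icc a b, ((∫ x in Ioc (k:ℝ) ((k:ℝ)+1), F x) - f (((k:ℝ) + 1) / s))
      ≤ ∑ k ∈ Finset.range N, ((∫ x in Ioc (k:ℝ) ((k:ℝ)+1), F x) - f (((k:ℝ) + 1) / s)) := by
    apply Finset.sum_le_sum_of_subset_of_nonneg hsubset
    intro k _ _
    linarith [hgap0 k]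
  have hstep2 : ∑ k ∈ Finset.Icc a b, (g k - g (k+1)) / 2
      ≤ ∑ k ∈ Finset.Icc a b, ((∫ x in Ioc (k:ℝ) ((k:ℝ)+1), F x) - f (((k:ℝ) + 1) / s)) := by
    apply Finset.sum_le_sum
    intro k hk
    have := hgap k hk
    have hg1 : g k = f (((k:ℝ) + 1) / s) := rfl
    have hg2 : g (k+1) = f (((k:ℝ) + 2) / s) := by
      rw [hg]; push_cast; ring_nf
    rw [hg1, hg2]
    linarith
  have hsum2 : ∑ k ∈ Finset.Icc a b, (g k - g (k+1)) / 2 = (g a - g (b+1)) / 2 := by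
    rw [← Finset.sum_div, htel]
  have hfinal : (1 / 2) * (f (p - δ / 2) - f (p + δ / 2)) ≤ (g a - g (b+1)) / 2 := by
    have hga : f (p - δ / 2) ≤ g a := by
      apply hanti (mem_Ici.mpr (div_nonneg (by positivity) hs0.le))
        (mem_Ici.mpr (by nlinarith))
      rw [div_le_iff₀ hs0]; nlinarith [ha1]
    have hgb : g (b+1) ≤ f (p + δ / 2) := by
      have : g (b+1) = f (((b:ℝ) + 2) / s) := by rw [hg]; push_cast; ring_nf
      rw [this]
      apply hanti (mem_Ici.mpr (by nlinarith))
        (mem_Ici.mpr (div_nonneg (by positivity) hs0.le))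
      rw [le_div_iff₀ hs0]; nlinarith [hb1]
    linarith
  calc (1 / 2) * (f (p - δ / 2) - f (p + δ / 2)) ≤ (g a - g (b+1)) / 2 := hfinal
  _ = ∑ k ∈ Finset.Icc a b, (g k - g (k+1)) / 2 := hsum2.symm
  _ ≤ ∑ k ∈ Finset.Icc a b, ((∫ x in Ioc (k:ℝ) ((k:ℝ)+1), F x) - f (((k:ℝ) + 1) / s)) := hstep2
  _ ≤ ∑ k ∈ Finset.range N, ((∫ x in Ioc (k:ℝ) ((k:ℝ)+1), F x) - f (((k:ℝ) + 1) / s)) := hstep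
end
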